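/- arXiv:2312.07281 — 2 statements merged into one kernel-verified Lean document; each statement's English description precedes it below -/
import Mathlib

section
/- Let Σ', Σ be u×u symmetric positive definite matrices with γ² ≥ λ_max(Σ'^{-1}Σ), let 𝚺' and 𝚺 be the corresponding block 'inflation' matrices with (i,j)-blocks σ'_{ij} 𝟙_{N_i}𝟙_{N_j}^T and σ_{ij} 𝟙_{N_i}𝟙_{N_j}^T respectively, and let K̄ be any positive semidefinite matrix of matching size. Then γ² (𝚺' ∘ K̄) − (𝚺 ∘ K̄) is positive semidefinite, i.e., γ² K_{Σ'} ⪰ K_Σ for the multi-task Gram matrices K_{Σ'} = 𝚺' ∘ K̄ and K_Σ = 𝚺 ∘ K̄. -/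
open Matrix

/-- The block "inflation" matrix whose `(i,j)` block is `σ i j • 𝟙_{N i} 𝟙_{N j}ᵀ`. -/
def blockOnes {u : ℕ} (N : Fin u → ℕ) (S : Matrix (Fin u) (Fin u) ℝ) :
    Matrix ((i : Fin u) × Fin (N i)) ((i : Fin u) × Fin (N i)) ℝ :=
  Matrix.of fun p q => S p.1 q.1

/-- A hermitian matrix whose spectrum is bounded above by `c` satisfies `c • 1 - A ⪰ 0`. -/
lemma smul_one_sub_posSemidef {n : Type*} [Fintype n] [DecidableEq n]
    {A : Matrix n n ℝ} (hA : A.IsHermitian) {c : ℝ}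
    (h : ∀ μ ∈ spectrum ℝ A, μ ≤ c) : (c • (1 : Matrix n n ℝ) - A).PosSemidef := by
  have hd : (Matrix.diagonal (fun i => c - hA.eigenvalues i)).PosSemidef :=
    Matrix.posSemidef_diagonal_iff.mpr fun i =>
      sub_nonneg.mpr (h _ (hA.eigenvalues_mem_spectrum_real i))
  have hps := hd.mul_mul_conjTranspose_same (hA.eigenvectorUnitary : Matrix n n ℝ)
  have hU : (hA.eigenvectorUnitary : Matrix n n ℝ) *
      (hA.eigenvectorUnitary : Matrix n n ℝ)ᴴ = 1 := by
    simpa [star_eq_conjTranspose] using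
      (Matrix.mem_unitaryGroup_iff).mp (hA.eigenvectorUnitary).2
  have hdiag : Matrix.diagonal (fun i => c - hA.eigenvalues i)
      = c • (1 : Matrix n n ℝ) - diagonal (RCLike.ofReal ∘ hA.eigenvalues) := by
    rw [smul_one_eq_diagonal, ← diagonal_sub]
    rfl
  have hEq : (hA.eigenvectorUnitary : Matrix n n ℝ) *
      Matrix.diagonal (fun i => c - hA.eigenvalues i) *
      (hA.eigenvectorUnitary : Matrix n n ℝ)ᴴ = c • (1 : Matrix n n ℝ) - A := by
    rw [hdiag, mul_sub, sub_mul, Matrix.mul_smul, mul_one, smul_mul_assoc, hU]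
    congr 1
    conv_rhs => rw [hA.spectral_theorem]
    rw [Unitary.conjStarAlgAut_apply, star_eq_conjTranspose]
  rwa [hEq] at hps

open scoped MatrixOrder in
/-- The key eigenvalue bound : `γ² S' - S ⪰ 0`. -/
lemma smul_sub_posSemidef {n : Type*} [Fintype n] [DecidableEq n]
    {S' S : Matrix n n ℝ} (hS' : S'.PosDef) (hS : S.PosDef) (γ : ℝ)
    (hγ : ∀ μ ∈ spectrum ℝ (S'⁻¹ * S), μ ≤ γ ^ 2) :
    (γ ^ 2 • S' - S).PosSemidef := by
  set R := CFC.sqrt S' with hRdef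
  have hRps : R.PosSemidef := (CFC.sqrt_nonneg S').posSemidef
  have hRR : R * R = S' := CFC.sqrt_mul_sqrt_self S' hS'.posSemidef.nonneg
  have hdet : IsUnit R.det := by
    have h2 : R.det * R.det = S'.det := by rw [← det_mul, hRR]
    have : S'.det ≠ 0 := ne_of_gt hS'.det_pos
    exact isUnit_iff_ne_zero.mpr (fun h0 => this (by rw [← h2, h0, zero_mul]))
  have hRunit : IsUnit R := (Matrix.isUnit_iff_isUnit_det R).mpr hdet
  have hRRinv : R * R⁻¹ = 1 := mul_nonsing_inv R hdet
  have hRinvR : R⁻¹ * R = 1 := nonsing_inv_mul R hdet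
  set A := R⁻¹ * S * R⁻¹ with hAdef
  have hApsd : A.PosSemidef := by
    have := hS.posSemidef.conjTranspose_mul_mul_same R⁻¹
    rwa [(hRps.isHermitian.inv).eq] at this
  -- spectrum of S'⁻¹ * S equals spectrum of A
  have hspec : spectrum ℝ A = spectrum ℝ (S'⁻¹ * S) := by
    have hSinv : S'⁻¹ = R⁻¹ * R⁻¹ := by rw [← hRR, Matrix.mul_inv_rev]
    have hconj : (↑hRunit.unit⁻¹ : Matrix n n ℝ) * A * (↑hRunit.unit : Matrix n n ℝ)
        = S'⁻¹ * S := by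
      rw [Matrix.coe_units_inv, IsUnit.unit_spec, hSinv, hAdef]
      simp only [mul_assoc]
      rw [hRinvR, mul_one]
    rw [← hconj, spectrum.units_conjugate']
  have hbound : ∀ μ ∈ spectrum ℝ A, μ ≤ γ ^ 2 := by
    intro μ hμ; exact hγ μ (hspec ▸ hμ)
  have h1 : (γ ^ 2 • (1 : Matrix n n ℝ) - A).PosSemidef :=
    smul_one_sub_posSemidef hApsd.isHermitian hbound
  have h2 := h1.mul_mul_conjTranspose_same R
  have hEq : R * (γ ^ 2 • (1 : Matrix n n ℝ) - A) * Rᴴ = γ ^ 2 • S' - S := by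
    rw [hRps.isHermitian.eq, mul_sub, sub_mul, Matrix.mul_smul, mul_one, smul_mul_assoc, hRR]
    congr 1
    rw [hAdef, ← mul_assoc, ← mul_assoc, hRRinv, one_mul, mul_assoc, hRinvR, mul_one]
  rwa [hEq] at h2

open scoped MatrixOrder in
/-- Schur-type lemma for block-constant inflation matrices. -/
lemma hadamard_blockOnes_posSemidef {u : ℕ} (N : Fin u → ℕ)
    {M : Matrix (Fin u) (Fin u) ℝ} (hM : M.PosSemidef)
    {K : Matrix ((i : Fin u) × Fin (N i)) ((i : Fin u) × Fin (N i)) ℝ}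
    (hK : K.PosSemidef) : (Matrix.hadamard (blockOnes N M) K).PosSemidef := by
  set A := CFC.sqrt M with hAdef
  have hAps : A.PosSemidef := (CFC.sqrt_nonneg M).posSemidef
  have hAA : A * A = M := CFC.sqrt_mul_sqrt_self M hM.nonneg
  have hdecomp : Matrix.hadamard (blockOnes N M) K
      = ∑ k : Fin u, (diagonal (fun p : (i : Fin u) × Fin (N i) => A k p.1)) * K *
          (diagonal (fun p : (i : Fin u) × Fin (N i) => A k p.1)) := by
    ext p q
    simp only [Matrix.sum_apply, hadamard_apply, blockOnes, of_apply,
      Matrix.mul_diagonal, Matrix.diagonal_mul]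
    have hMpq : M p.1 q.1 = ∑ k : Fin u, A k p.1 * A k q.1 := by
      rw [← hAA, Matrix.mul_apply]
      refine Finset.sum_congr rfl fun k _ => ?_
      have : A p.1 k = A k p.1 := by
        conv_lhs => rw [← hAps.isHermitian.eq]
        simp [conjTranspose_apply]
      rw [this]
    rw [hMpq, Finset.sum_mul]
    refine Finset.sum_congr rfl fun k _ => by ring
  rw [hdecomp]
  refine Finset.sum_induction _ _ (fun a b ha hb => ha.add hb) (Matrix.PosSemidef.zero)
    fun k _ => ?_
  have hherm : (diagonal (fun p : (i : Fin u) × Fin (N i) => A k p.1))ᴴ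
      = diagonal (fun p : (i : Fin u) × Fin (N i) => A k p.1) := by
    rw [diagonal_conjTranspose]
    rfl
  have := hK.conjTranspose_mul_mul_same (diagonal (fun p : (i : Fin u) × Fin (N i) => A k p.1))
  rwa [hherm] at this

theorem gram_loewner_of_eig_bound {u : ℕ} (N : Fin u → ℕ)
    (S' S : Matrix (Fin u) (Fin u) ℝ) (hS' : S'.PosDef) (hS : S.PosDef) (γ : ℝ)
    (hγ : ∀ μ ∈ spectrum ℝ (S'⁻¹ * S), μ ≤ γ ^ 2)
    (Kbar : Matrix ((i : Fin u) × Fin (N i)) ((i : Fin u) × Fin (N i)) ℝ)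
    (hK : Kbar.PosSemidef) :
    (γ ^ 2 • Matrix.hadamard (blockOnes N S') Kbar
      - Matrix.hadamard (blockOnes N S) Kbar).PosSemidef := by
  have hM : (γ ^ 2 • S' - S).PosSemidef := smul_sub_posSemidef hS' hS γ hγ
  have := hadamard_blockOnes_posSemidef N hM hK
  have hEq : Matrix.hadamard (blockOnes N (γ ^ 2 • S' - S)) Kbar
      = γ ^ 2 • Matrix.hadamard (blockOnes N S') Kbar
        - Matrix.hadamard (blockOnes N S) Kbar := by
    ext p q
    simp only [hadamard_apply, blockOnes, of_apply, Matrix.sub_apply, Matrix.smul_apply,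
      smul_eq_mul]
    ring
  rwa [hEq] at this
end

section
/- Let K and K' be two reproducing kernel Hilbert space kernels on a set X with K'' (x,x') = Σ''·k(x,x') and K'(x,x') = Σ'·k(x,x') for a scalar base kernel k and positive definite matrices Σ', Σ''. If λ² ≥ λ_max((Σ'')^{-1}Σ'), then for every vector-valued function μ in the RKHS of K'', λ² ‖μ‖²_{K'} ≥ ‖μ‖²_{K''}. -/
open Matrix
open Pointwise
open scoped MatrixOrder

/-- The squared multi-task RKHS norm of a vector-valued function whose latent
components have Gram matrix `M`, for kernel `Σ·k`: `‖μ‖²_K = 𝟙ᵀ(Σ⁻¹ ∘ M)𝟙`. -/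
noncomputable def multiTaskNormSq {u : ℕ} (S M : Matrix (Fin u) (Fin u) ℝ) : ℝ :=
  (fun _ : Fin u => (1 : ℝ)) ⬝ᵥ ((Matrix.hadamard S⁻¹ M) *ᵥ fun _ => (1 : ℝ))

-- trace nonneg
lemma psd_trace_nonneg {n : ℕ} {A : Matrix (Fin n) (Fin n) ℝ} (hA : A.PosSemidef) :
    0 ≤ A.trace := by
  rw [Matrix.trace]
  refine Finset.sum_nonneg fun i _ => ?_
  have := hA.dotProduct_mulVec_nonneg (Pi.single i 1)
  simpa [Matrix.mulVec, dotProduct, Pi.single_apply] using this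

-- pairing nonneg
lemma psd_pairing_nonneg {n : ℕ} {B M : Matrix (Fin n) (Fin n) ℝ}
    (hB : B.PosSemidef) (hM : M.PosSemidef) :
    0 ≤ ∑ i, ∑ j, B i j * M i j := by
  have key : ∑ i, ∑ j, B i j * M i j = (B * Mᵀ).trace := by
    simp [Matrix.trace, Matrix.mul_apply, Matrix.diag]
  rw [key, show Mᵀ = M from hM.1, Matrix.trace_mul_comm]
  obtain ⟨C, rfl⟩ := CStarAlgebra.nonneg_iff_eq_star_mul_self.mp hB.nonneg
  rw [← Matrix.mul_assoc, Matrix.trace_mul_cycle]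
  exact psd_trace_nonneg (hM.mul_mul_conjTranspose_same C)

lemma key_psd {n : ℕ} (S' S'' : Matrix (Fin n) (Fin n) ℝ)
    (hS' : S'.PosDef) (hS'' : S''.PosDef) (lam : ℝ)
    (hlam : ∀ μ ∈ spectrum ℝ (S''⁻¹ * S'), μ ≤ lam ^ 2) :
    (lam ^ 2 • S'⁻¹ - S''⁻¹).PosSemidef := by
  classical
  set T := CFC.sqrt S' with hTdef
  have hTpsd : T.PosSemidef := (CFC.sqrt_nonneg S').posSemidef
  have hTsq : T * T = S' := by
    have := CFC.sq_sqrt S' hS'.posSemidef.nonneg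
    rwa [pow_two] at this
  have hTunit : IsUnit T := by
    rw [Matrix.isUnit_iff_isUnit_det]
    have hdet : T.det * T.det = S'.det := by rw [← Matrix.det_mul, hTsq]
    have := hS'.det_pos
    refine isUnit_iff_ne_zero.mpr fun h => this.ne' ?_
    rw [← hdet, h, mul_zero]
  have hTher : T.IsHermitian := hTpsd.1
  have hTinv_her : (T⁻¹).IsHermitian := by
    rw [Matrix.IsHermitian, Matrix.conjTranspose_nonsing_inv, hTher.eq]
  have hS''inv_psd : (S''⁻¹).PosSemidef := hS''.posSemidef.inv
  set G := T * S''⁻¹ * T with hGdef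
  have hGher : G.IsHermitian := by
    rw [Matrix.IsHermitian, hGdef]
    simp only [Matrix.conjTranspose_mul, hTher.eq, hS''inv_psd.1.eq, Matrix.mul_assoc]
  -- spectrum of G equals spectrum of S''⁻¹ * S'
  have hTT : T * T⁻¹ = 1 := Matrix.mul_nonsing_inv T ((Matrix.isUnit_iff_isUnit_det T).mp hTunit)
  have hconj : G = T * (S''⁻¹ * S') * T⁻¹ := by
    rw [hGdef, ← hTsq]
    rw [show T * (S''⁻¹ * (T * T)) * T⁻¹ = T * S''⁻¹ * T * (T * T⁻¹) by
      simp only [Matrix.mul_assoc], hTT, Matrix.mul_one]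
  have hspec : spectrum ℝ G = spectrum ℝ (S''⁻¹ * S') := by
    rw [hconj, ← hTunit.unit_spec, ← Matrix.coe_units_inv]
    exact spectrum.units_conjugate
  -- D = lam ^ 2 • 1 - G is PSD
  have hDher : (lam ^ 2 • (1 : Matrix (Fin n) (Fin n) ℝ) - G).IsHermitian :=
    by simp [Matrix.IsHermitian, Matrix.conjTranspose_sub, Matrix.conjTranspose_smul, ← Matrix.conjTranspose_eq_transpose_of_trivial, hGher.eq]
  have hD : (lam ^ 2 • (1 : Matrix (Fin n) (Fin n) ℝ) - G).PosSemidef := by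
    apply hDher.posSemidef_iff_eigenvalues_nonneg.mpr
    intro i
    have hmem := hDher.eigenvalues_mem_spectrum_real i
    have hset : spectrum ℝ (lam ^ 2 • (1 : Matrix (Fin n) (Fin n) ℝ) - G)
        = ({lam ^ 2} : Set ℝ) - spectrum ℝ (S''⁻¹ * S') := by
      rw [← hspec,
        show lam ^ 2 • (1 : Matrix (Fin n) (Fin n) ℝ)
          = algebraMap ℝ (Matrix (Fin n) (Fin n) ℝ) (lam ^ 2) from
          (Algebra.algebraMap_eq_smul_one _).symm,
        ← spectrum.singleton_sub_eq]
    rw [hset] at hmem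
    obtain ⟨a, ha, b, hb, hab⟩ := Set.mem_sub.mp hmem
    rw [Set.mem_singleton_iff] at ha
    subst ha
    have := hlam b hb
    rw [← hab]
    exact sub_nonneg.mpr this
  -- conjugate back
  have hE : lam ^ 2 • S'⁻¹ - S''⁻¹ = T⁻¹ * (lam ^ 2 • (1:Matrix (Fin n) (Fin n) ℝ) - G) * T⁻¹ := by
    rw [Matrix.mul_sub, Matrix.sub_mul, Matrix.mul_smul, Matrix.smul_mul, Matrix.mul_one]
    congr 1
    · rw [← Matrix.mul_inv_rev, hTsq]
    · rw [hGdef, show T⁻¹ * (T * S''⁻¹ * T) * T⁻¹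
        = (T⁻¹ * T) * S''⁻¹ * (T * T⁻¹) by simp only [Matrix.mul_assoc], hTT,
        Matrix.nonsing_inv_mul T ((Matrix.isUnit_iff_isUnit_det T).mp hTunit),
        Matrix.one_mul, Matrix.mul_one]
  rw [hE]
  have := hD.mul_mul_conjTranspose_same T⁻¹
  rwa [hTinv_her.eq] at this

theorem rkhs_norm_comparison {u : ℕ} (S' S'' : Matrix (Fin u) (Fin u) ℝ)
    (hS' : S'.PosDef) (hS'' : S''.PosDef) (lam : ℝ)
    (hlam : ∀ μ ∈ spectrum ℝ (S''⁻¹ * S'), μ ≤ lam ^ 2) :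
    ∀ M : Matrix (Fin u) (Fin u) ℝ, M.PosSemidef →
      multiTaskNormSq S'' M ≤ lam ^ 2 * multiTaskNormSq S' M := by
  intro M hM
  have hE := key_psd S' S'' hS' hS'' lam hlam
  have h0 := psd_pairing_nonneg hE hM
  have hexp : ∑ i, ∑ j, (lam ^ 2 • S'⁻¹ - S''⁻¹) i j * M i j
      = lam ^ 2 * (∑ i, ∑ j, S'⁻¹ i j * M i j) - ∑ i, ∑ j, S''⁻¹ i j * M i j := by
    simp [Matrix.sub_apply, Matrix.smul_apply, sub_mul, Finset.sum_sub_distrib,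
      Finset.mul_sum, smul_eq_mul, mul_assoc]
  have h' : multiTaskNormSq S' M = ∑ i, ∑ j, S'⁻¹ i j * M i j := by
    simp [multiTaskNormSq, dotProduct, Matrix.mulVec, Matrix.hadamard]
  have h'' : multiTaskNormSq S'' M = ∑ i, ∑ j, S''⁻¹ i j * M i j := by
    simp [multiTaskNormSq, dotProduct, Matrix.mulVec, Matrix.hadamard]
  rw [h', h'']
  linarith [hexp ▸ h0]
end
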